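/- arXiv:2102.10773 — 12 statements merged into one kernel-verified Lean document; each statement's English description precedes it below -/
import Mathlib

section
/- Let n ∈ ℕ, λ > 0, let M ∈ ℝ^{n×n} be a symmetric positive semidefinite matrix, let z ∈ {0,1}ⁿ be a binary vector, and let Z = diag(z). Then λI + ZMZ and λI + ZM are invertible and (λI + ZMZ)^{-1}Z = (λI + ZM)^{-1}Z. -/
theorem binary_equiv (n : ℕ) (lam : ℝ) (hlam : 0 < lam)
    (M : Matrix (Fin n) (Fin n) ℝ) (hM : M.PosSemidef)
    (z : Fin n → ℝ) (hz : ∀ i, z i = 0 ∨ z i = 1) :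
    IsUnit (lam • (1 : Matrix (Fin n) (Fin n) ℝ) +
      Matrix.diagonal z * M * Matrix.diagonal z) ∧
    IsUnit (lam • (1 : Matrix (Fin n) (Fin n) ℝ) + Matrix.diagonal z * M) ∧
    (lam • (1 : Matrix (Fin n) (Fin n) ℝ) +
        Matrix.diagonal z * M * Matrix.diagonal z)⁻¹ * Matrix.diagonal z =
      (lam • (1 : Matrix (Fin n) (Fin n) ℝ) + Matrix.diagonal z * M)⁻¹ *
        Matrix.diagonal z := by
  set Z : Matrix (Fin n) (Fin n) ℝ := Matrix.diagonal z with hZdef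
  set A : Matrix (Fin n) (Fin n) ℝ := lam • 1 + Z * M * Z with hAdef
  set B : Matrix (Fin n) (Fin n) ℝ := lam • 1 + Z * M with hBdef
  have hZZ : Z * Z = Z := by
    rw [hZdef, Matrix.diagonal_mul_diagonal]
    ext i j
    by_cases hij : i = j
    · subst hij
      rcases hz i with h | h <;> simp [Matrix.diagonal_apply, h]
    · simp [Matrix.diagonal_apply, hij]
  -- A is positive definite
  have hlam1 : (lam • (1 : Matrix (Fin n) (Fin n) ℝ)).PosDef := by
    rw [Matrix.smul_one_eq_diagonal]
    exact Matrix.posDef_diagonal_iff.mpr fun i => hlam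
  have hZMZ : (Z * M * Z).PosSemidef := by
    have := hM.mul_mul_conjTranspose_same Z
    simpa [hZdef, Matrix.diagonal_conjTranspose] using this
  have hApd : A.PosDef := hlam1.add_posSemidef hZMZ
  have hAu : IsUnit A := hApd.isUnit
  have hAdet : IsUnit A.det := (Matrix.isUnit_iff_isUnit_det A).mp hAu
  have hAinv : A * A⁻¹ = 1 := Matrix.mul_nonsing_inv A hAdet
  have hinvA : A⁻¹ * A = 1 := Matrix.nonsing_inv_mul A hAdet
  -- key: (1 - Z) * A = lam • (1 - Z)
  have h1 : (1 - Z) * A = lam • (1 - Z) := by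
    have hz0 : (1 - Z) * (Z * M * Z) = 0 := by
      have e : (1 - Z) * (Z * M * Z) = Z * M * Z - Z * Z * (M * Z) := by
        noncomm_ring
      rw [e, hZZ, ← mul_assoc, sub_self]
    rw [hAdef, mul_add, hz0, add_zero, Matrix.mul_smul, mul_one]
  have h2 : (1 - Z) * A⁻¹ = lam⁻¹ • (1 - Z) := by
    have e : (1 : Matrix (Fin n) (Fin n) ℝ) - Z = lam • ((1 - Z) * A⁻¹) := by
      calc (1 : Matrix (Fin n) (Fin n) ℝ) - Z
          = (1 - Z) * A * A⁻¹ := by rw [mul_assoc, hAinv, mul_one]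
        _ = lam • ((1 - Z) * A⁻¹) := by rw [h1, Matrix.smul_mul]
    have := congrArg (fun X => lam⁻¹ • X) e
    simp only [smul_smul, inv_mul_cancel₀ hlam.ne', one_smul] at this
    exact this.symm
  have hZAZ : (1 - Z) * A⁻¹ * Z = 0 := by
    rw [h2, Matrix.smul_mul, sub_mul, one_mul, hZZ, sub_self, smul_zero]
  -- explicit inverse of B
  set N : Matrix (Fin n) (Fin n) ℝ := A⁻¹ * (Z * M * (1 - Z)) with hNdef
  have hBA : B = A + Z * M * (1 - Z) := by
    rw [hBdef, hAdef, mul_sub, mul_one]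
    abel
  have hN2 : Z * M * (1 - Z) * N = 0 := by
    rw [hNdef]
    have e : Z * M * (1 - Z) * (A⁻¹ * (Z * M * (1 - Z)))
        = Z * M * ((1 - Z) * A⁻¹ * Z) * (M * (1 - Z)) := by noncomm_ring
    rw [e, hZAZ, mul_zero, zero_mul]
  have hNN : N * N = 0 := by
    rw [hNdef]
    have e : A⁻¹ * (Z * M * (1 - Z)) * (A⁻¹ * (Z * M * (1 - Z)))
        = A⁻¹ * (Z * M) * ((1 - Z) * A⁻¹ * Z) * (M * (1 - Z)) := by noncomm_ring
    rw [e, hZAZ, mul_zero, zero_mul]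
  have hAN : A * N = Z * M * (1 - Z) := by
    rw [hNdef, ← mul_assoc, hAinv, one_mul]
  have hBright : B * ((1 - N) * A⁻¹) = 1 := by
    rw [hBA]
    have expand : (A + Z * M * (1 - Z)) * ((1 - N) * A⁻¹)
        = (A - A * N + (Z * M * (1 - Z) - Z * M * (1 - Z) * N)) * A⁻¹ := by
      noncomm_ring
    rw [expand, hAN, hN2, sub_zero, sub_add_cancel, hAinv]
  have hBleft : ((1 - N) * A⁻¹) * B = 1 := by
    rw [hBA]
    have expand : ((1 - N) * A⁻¹) * (A + Z * M * (1 - Z))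
        = (1 - N) * (A⁻¹ * A) + (1 - N) * (A⁻¹ * (Z * M * (1 - Z))) := by
      noncomm_ring
    rw [expand, hinvA, mul_one, ← hNdef, sub_mul, one_mul, hNN, sub_zero]
    abel
  have hBu : IsUnit B := ⟨⟨B, (1 - N) * A⁻¹, hBright, hBleft⟩, rfl⟩
  have hBinv : B⁻¹ = (1 - N) * A⁻¹ := Matrix.inv_eq_left_inv hBleft
  refine ⟨hAu, hBu, ?_⟩
  rw [hBinv]
  have hNAZ : N * (A⁻¹ * Z) = 0 := by
    rw [hNdef]
    have e : A⁻¹ * (Z * M * (1 - Z)) * (A⁻¹ * Z)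
        = A⁻¹ * (Z * M) * ((1 - Z) * A⁻¹ * Z) := by noncomm_ring
    rw [e, hZAZ, mul_zero]
  calc A⁻¹ * Z = A⁻¹ * Z - N * (A⁻¹ * Z) := by rw [hNAZ, sub_zero]
    _ = (1 - N) * A⁻¹ * Z := by noncomm_ring
end

section
/- Let n ∈ ℕ, λ > 0, let M ∈ ℝ^{n×n} be a symmetric positive semidefinite matrix, let z ∈ {0,1}ⁿ be a binary vector, and let Z = diag(z). Set A = Z(M + λI)Z and B = (λI + ZMZ)^{-1} − (1/λ)(I − Z). Then B is a Moore–Penrose pseudoinverse of A, i.e., ABA = A, BAB = B, (AB)ᵀ = AB, and (BA)ᵀ = BA. -/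
open Matrix

theorem pseudoinverse_formula (n : ℕ) (lam : ℝ) (hlam : 0 < lam)
    (M : Matrix (Fin n) (Fin n) ℝ) (hM : M.PosSemidef)
    (z : Fin n → ℝ) (hz : ∀ i, z i = 0 ∨ z i = 1)
    (Z : Matrix (Fin n) (Fin n) ℝ) (hZ : Z = Matrix.diagonal z)
    (A B : Matrix (Fin n) (Fin n) ℝ)
    (hA : A = Z * (M + lam • (1 : Matrix (Fin n) (Fin n) ℝ)) * Z)
    (hB : B = (lam • (1 : Matrix (Fin n) (Fin n) ℝ) + Z * M * Z)⁻¹ -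
      (1 / lam) • ((1 : Matrix (Fin n) (Fin n) ℝ) - Z)) :
    A * B * A = A ∧ B * A * B = B ∧ (A * B)ᵀ = A * B ∧ (B * A)ᵀ = B * A := by
  set C : Matrix (Fin n) (Fin n) ℝ := lam • (1 : Matrix (Fin n) (Fin n) ℝ) + Z * M * Z with hC
  have hZt : Zᵀ = Z := by rw [hZ]; exact diagonal_transpose z
  have hZZ : Z * Z = Z := by
    have hfz : (fun i => z i * z i) = z := funext fun i => by rcases hz i with h | h <;> simp [h]
    rw [hZ, diagonal_mul_diagonal, hfz]
  have hZZX : ∀ X : Matrix (Fin n) (Fin n) ℝ, Z * (Z * X) = Z * X := fun X => by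
    rw [← mul_assoc, hZZ]
  -- C is positive definite, hence invertible
  have hCpd : C.PosDef := by
    have h1 : (lam • (1 : Matrix (Fin n) (Fin n) ℝ)).PosDef := by
      rw [smul_one_eq_diagonal]
      exact posDef_diagonal_iff.mpr fun i => hlam
    have h2 : (Z * M * Z).PosSemidef := by
      have := hM.mul_mul_conjTranspose_same Z
      simpa [hZt] using this
    exact h1.add_posSemidef h2
  have hdet : IsUnit C.det := hCpd.det_pos.ne'.isUnit
  have hCC : C * C⁻¹ = 1 := mul_nonsing_inv C hdet
  have hCC' : C⁻¹ * C = 1 := nonsing_inv_mul C hdet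
  -- A = Z * C = C * Z
  have hAe : A = Z * M * Z + lam • Z := by
    rw [hA, mul_add, add_mul, mul_smul_comm, smul_mul_assoc, mul_one, hZZ]
  have hZC : Z * C = A := by
    rw [hC, hAe, mul_add, mul_smul_comm, mul_one, mul_assoc Z M Z, hZZX, add_comm]
  have hCZ : C * Z = A := by
    rw [hC, hAe, add_mul, smul_mul_assoc, one_mul, mul_assoc (Z * M) Z Z, hZZ, add_comm]
  -- (1 - Z) * C⁻¹ = (1/lam) • (1 - Z)
  have hIZ : ((1 : Matrix (Fin n) (Fin n) ℝ) - Z) * C = lam • ((1 : Matrix (Fin n) (Fin n) ℝ) - Z) := by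
    rw [sub_mul, one_mul, hZC, hC, hAe, smul_sub]
    abel
  have hIZi : ((1 : Matrix (Fin n) (Fin n) ℝ) - Z) * C⁻¹
      = (1 / lam) • ((1 : Matrix (Fin n) (Fin n) ℝ) - Z) := by
    have h : ((1 - Z) * C) * C⁻¹ = (lam • ((1 : Matrix (Fin n) (Fin n) ℝ) - Z)) * C⁻¹ := by
      rw [hIZ]
    rw [mul_assoc, hCC, mul_one, smul_mul_assoc] at h
    conv_rhs => rw [h]
    rw [smul_smul, one_div, inv_mul_cancel₀ hlam.ne', one_smul]
  have hZCi : Z * C⁻¹ = B := by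
    have h : C⁻¹ - Z * C⁻¹ = (1 / lam) • ((1 : Matrix (Fin n) (Fin n) ℝ) - Z) := by
      rw [← hIZi, sub_mul, one_mul]
    rw [hB, ← h]; abel
  have hZB : Z * B = B := by
    rw [hB, mul_sub, mul_smul_comm, mul_sub, mul_one, hZZ, sub_self, smul_zero, sub_zero, ← hB,
      hZCi]
  have hACi : A * C⁻¹ = Z := by rw [← hZC, mul_assoc, hCC, mul_one]
  have hAZ : A * Z = A := by rw [← hCZ, mul_assoc, hZZ]
  have hCiA : C⁻¹ * A = Z := by rw [← hCZ, ← mul_assoc, hCC', one_mul]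
  have hZA : Z * A = A := by rw [← hZC, ← mul_assoc, hZZ]
  have hAB : A * B = Z := by
    rw [hB, mul_sub, hACi, mul_smul_comm, mul_sub, mul_one, hAZ, sub_self, smul_zero, sub_zero]
  have hBA : B * A = Z := by
    rw [hB, sub_mul, hCiA, smul_mul_assoc, sub_mul, one_mul, hZA, sub_self, smul_zero, sub_zero]
  refine ⟨?_, ?_, ?_, ?_⟩
  · rw [hAB, hZA]
  · rw [hBA, hZB]
  · rw [hAB, hZt]
  · rw [hBA, hZt]
end

section
/- Let n ∈ ℕ, λ > 0, let M ∈ ℝ^{n×n} be a symmetric positive semidefinite matrix, let z ∈ {0,1}ⁿ be a binary vector, and let Z = diag(z). If B ∈ ℝ^{n×n} is any Moore–Penrose pseudoinverse of A = Z(M + λI)Z (i.e., ABA = A, BAB = B, (AB)ᵀ = AB, (BA)ᵀ = BA), then BZ = (λI + ZM)^{-1}Z. -/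
open Matrix

theorem pseudoinverse_relaxation (n : ℕ) (lam : ℝ) (hlam : 0 < lam)
    (M : Matrix (Fin n) (Fin n) ℝ) (hM : M.PosSemidef)
    (z : Fin n → ℝ) (hz : ∀ i, z i = 0 ∨ z i = 1)
    (Z : Matrix (Fin n) (Fin n) ℝ) (hZ : Z = Matrix.diagonal z)
    (A B : Matrix (Fin n) (Fin n) ℝ)
    (hA : A = Z * (M + lam • (1 : Matrix (Fin n) (Fin n) ℝ)) * Z)
    (h1 : A * B * A = A) (h2 : B * A * B = B)
    (h3 : (A * B)ᵀ = A * B) (h4 : (B * A)ᵀ = B * A) :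
    B * Z = (lam • (1 : Matrix (Fin n) (Fin n) ℝ) + Z * M)⁻¹ * Z := by
  have hMt : Mᵀ = M := hM.1
  have hZt : Zᵀ = Z := by rw [hZ, Matrix.diagonal_transpose]
  have hZ2 : Z * Z = Z := by
    have hzz : (fun i => z i * z i) = z := by
      funext i; rcases hz i with h | h <;> simp [h]
    rw [hZ, Matrix.diagonal_mul_diagonal, hzz]
  have hAt : Aᵀ = A := by
    rw [hA]
    simp [Matrix.transpose_mul, Matrix.transpose_add, hMt, hZt, Matrix.mul_assoc]
  have hZA : Z * A = A := by
    rw [hA, ← Matrix.mul_assoc Z (Z * (M + lam • (1 : Matrix (Fin n) (Fin n) ℝ))) Z,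
      ← Matrix.mul_assoc Z Z (M + lam • (1 : Matrix (Fin n) (Fin n) ℝ)), hZ2]
  have hAZ : A * Z = A := by
    rw [hA, Matrix.mul_assoc (Z * (M + lam • (1 : Matrix (Fin n) (Fin n) ℝ))) Z Z, hZ2]
  -- B * Z = B and Z * B = B
  have h3' : Bᵀ * A = A * B := by rw [← h3, Matrix.transpose_mul, hAt]
  have h4' : A * Bᵀ = B * A := by rw [← h4, Matrix.transpose_mul, hAt]
  have hBBA : B * Bᵀ * A = B := by
    calc B * Bᵀ * A = B * (Bᵀ * A) := by rw [Matrix.mul_assoc]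
    _ = B * (A * B) := by rw [h3']
    _ = B := by rw [← Matrix.mul_assoc, h2]
  have hBZ : B * Z = B := by
    calc B * Z = B * Bᵀ * A * Z := by rw [hBBA]
    _ = B * Bᵀ * (A * Z) := by rw [Matrix.mul_assoc]
    _ = B := by rw [hAZ, hBBA]
  have hABB : A * Bᵀ * B = B := by
    calc A * Bᵀ * B = (B * A) * B := by rw [h4']
    _ = B := h2
  have hZB : Z * B = B := by
    calc Z * B = Z * (A * Bᵀ * B) := by rw [hABB]
    _ = (Z * A) * Bᵀ * B := by rw [← Matrix.mul_assoc, ← Matrix.mul_assoc]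
    _ = B := by rw [hZA, hABB]
  -- idempotence of Z on vectors
  have hZvv : ∀ v : Fin n → ℝ, Z.mulVec (Z.mulVec v) = Z.mulVec v := by
    intro v; rw [Matrix.mulVec_mulVec, hZ2]
  -- key injectivity: A is injective on the range of Z
  have key : ∀ v : Fin n → ℝ, Z.mulVec v = v → A.mulVec v = 0 → v = 0 := by
    intro v hv hav
    have hq : v ⬝ᵥ A.mulVec v = 0 := by rw [hav, dotProduct_zero]
    have hexp : v ⬝ᵥ A.mulVec v = v ⬝ᵥ M.mulVec v + lam * (v ⬝ᵥ v) := by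
      have hAv : A.mulVec v
          = Z.mulVec ((M + lam • (1 : Matrix (Fin n) (Fin n) ℝ)).mulVec (Z.mulVec v)) := by
        rw [hA, Matrix.mulVec_mulVec, Matrix.mulVec_mulVec]
      rw [hAv, hv]
      have hdz : v ⬝ᵥ Z.mulVec ((M + lam • (1 : Matrix (Fin n) (Fin n) ℝ)).mulVec v)
          = v ⬝ᵥ (M + lam • (1 : Matrix (Fin n) (Fin n) ℝ)).mulVec v := by
        rw [Matrix.dotProduct_mulVec v Z, ← Matrix.mulVec_transpose, hZt, hv]
      rw [hdz, Matrix.add_mulVec, dotProduct_add, Matrix.smul_mulVec,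
        Matrix.one_mulVec, dotProduct_smul, smul_eq_mul]
    have hMnn : 0 ≤ v ⬝ᵥ M.mulVec v := by have := hM.dotProduct_mulVec_nonneg v; simpa using this
    have hvv : v ⬝ᵥ v = 0 := by
      have hvvnn : 0 ≤ v ⬝ᵥ v := Finset.sum_nonneg fun i _ => mul_self_nonneg (v i)
      nlinarith [hexp ▸ hq]
    exact dotProduct_self_eq_zero.mp hvv
  -- A * B = Z
  have hQ : Z - A * B = 0 := by
    set Q := Z - A * B with hQdef
    have hQt : Qᵀ = Q := by rw [hQdef, Matrix.transpose_sub, hZt, h3]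
    have hQA : Q * A = 0 := by rw [hQdef, Matrix.sub_mul, hZA, h1, sub_self]
    have hAQ : A * Q = 0 := by
      have hh : (Q * A)ᵀ = A * Q := by rw [Matrix.transpose_mul, hAt, hQt]
      rw [← hh, hQA, Matrix.transpose_zero]
    have hZQ : Z * Q = Q := by
      rw [hQdef, Matrix.mul_sub, hZ2, ← Matrix.mul_assoc, hZA]
    ext i j
    have hv : Q.mulVec (Pi.single j 1) = 0 := by
      apply key
      · rw [Matrix.mulVec_mulVec, hZQ]
      · rw [Matrix.mulVec_mulVec, hAQ, Matrix.zero_mulVec]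
    have := congrFun hv i
    simpa [Matrix.mulVec_single] using this
  have hABZ : A * B = Z := by
    have hh := hQ; rw [sub_eq_zero] at hh; exact hh.symm
  -- C := lam • 1 + Z * M
  set C : Matrix (Fin n) (Fin n) ℝ := lam • (1 : Matrix (Fin n) (Fin n) ℝ) + Z * M with hC
  have hCZ : C * Z = A := by
    have e1 : C * Z = lam • Z + Z * M * Z := by
      rw [hC, Matrix.add_mul, Matrix.smul_mul, Matrix.one_mul]
    have e2 : A = lam • Z + Z * M * Z := by
      rw [hA, Matrix.mul_add, Matrix.mul_smul, Matrix.mul_one, Matrix.add_mul,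
        Matrix.smul_mul, hZ2, add_comm]
    rw [e1, e2]
  have hCB : C * B = Z := by
    calc C * B = C * (Z * B) := by rw [hZB]
    _ = (C * Z) * B := by rw [Matrix.mul_assoc]
    _ = Z := by rw [hCZ, hABZ]
  -- C is invertible
  have hdet : IsUnit C.det := by
    rw [isUnit_iff_ne_zero]
    intro hd
    obtain ⟨v, hv0, hv⟩ := (Matrix.exists_mulVec_eq_zero_iff).mpr hd
    have hCv : lam • v + Z.mulVec (M.mulVec v) = 0 := by
      have hh := hv
      rw [hC, Matrix.add_mulVec, Matrix.smul_mulVec, Matrix.one_mulVec,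
        ← Matrix.mulVec_mulVec] at hh
      exact hh
    have hvz : Z.mulVec v = v := by
      have e1 : Z.mulVec (lam • v + Z.mulVec (M.mulVec v))
          = lam • Z.mulVec v + Z.mulVec (M.mulVec v) := by
        rw [Matrix.mulVec_add, Matrix.mulVec_smul, hZvv]
      have e2 : lam • Z.mulVec v + Z.mulVec (M.mulVec v) = 0 := by
        rw [← e1, hCv, Matrix.mulVec_zero]
      have e3 : lam • Z.mulVec v = lam • v := by
        have := e2.trans hCv.symm
        exact add_right_cancel this
      exact smul_right_injective (Fin n → ℝ) (ne_of_gt hlam) e3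
    have hAv : A.mulVec v = 0 := by
      rw [← hCZ, ← Matrix.mulVec_mulVec, hvz, hv]
    exact hv0 (key v hvz hAv)
  calc B * Z = B := hBZ
  _ = 1 * B := by rw [Matrix.one_mul]
  _ = C⁻¹ * C * B := by rw [Matrix.nonsing_inv_mul C hdet]
  _ = C⁻¹ * Z := by rw [Matrix.mul_assoc, hCB]
end

section
/- Let n ∈ ℕ, λ > 0, let M ∈ ℝ^{n×n} be a symmetric positive semidefinite matrix, let z ∈ {0,1}ⁿ be a binary vector, and let Z = diag(z). If B ∈ ℝ^{n×n} is any Moore–Penrose pseudoinverse of A = Z(M + λI)Z (i.e., ABA = A, BAB = B, (AB)ᵀ = AB, (BA)ᵀ = BA), then BZ = (λI + ZMZ)^{-1}Z. -/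
open Matrix

theorem pseudoinverse_relaxation_alt (n : ℕ) (lam : ℝ) (hlam : 0 < lam)
    (M : Matrix (Fin n) (Fin n) ℝ) (hM : M.PosSemidef)
    (z : Fin n → ℝ) (hz : ∀ i, z i = 0 ∨ z i = 1)
    (Z : Matrix (Fin n) (Fin n) ℝ) (hZ : Z = Matrix.diagonal z)
    (A B : Matrix (Fin n) (Fin n) ℝ)
    (hA : A = Z * (M + lam • (1 : Matrix (Fin n) (Fin n) ℝ)) * Z)
    (h1 : A * B * A = A) (h2 : B * A * B = B)
    (h3 : (A * B)ᵀ = A * B) (h4 : (B * A)ᵀ = B * A) :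
    B * Z = (lam • (1 : Matrix (Fin n) (Fin n) ℝ) + Z * M * Z)⁻¹ * Z := by
  set C : Matrix (Fin n) (Fin n) ℝ := lam • (1 : Matrix (Fin n) (Fin n) ℝ) + Z * M * Z with hC
  -- basic facts about Z
  have hZsym : Zᵀ = Z := by rw [hZ, Matrix.diagonal_transpose]
  have hMsym : Mᵀ = M := by simpa using hM.isHermitian.eq
  have hZidem : Z * Z = Z := by
    have hzz : (fun i => z i * z i) = z := by
      funext i; rcases hz i with h | h <;> simp [h]
    rw [hZ, Matrix.diagonal_mul_diagonal, hzz]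
  -- C is positive definite, hence invertible
  have hZMZ : (Z * M * Z).PosSemidef := by
    have := hM.conjTranspose_mul_mul_same Z
    simpa [hZsym] using this
  have hCpd : C.PosDef := by
    have h1' : (lam • (1 : Matrix (Fin n) (Fin n) ℝ)).PosDef := by
      rw [Matrix.smul_one_eq_diagonal]
      exact Matrix.posDef_diagonal_iff.mpr fun i => hlam
    exact h1'.add_posSemidef hZMZ
  have hCunit : IsUnit C.det := hCpd.det_pos.ne'.isUnit
  have hCinv : C⁻¹ * C = 1 := Matrix.nonsing_inv_mul C hCunit
  have hCinv' : C * C⁻¹ = 1 := Matrix.mul_nonsing_inv C hCunit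
  have cancelL : ∀ X Y : Matrix (Fin n) (Fin n) ℝ, C * X = C * Y → X = Y := by
    intro X Y h
    calc X = C⁻¹ * C * X := by rw [hCinv, Matrix.one_mul]
      _ = C⁻¹ * (C * X) := Matrix.mul_assoc _ _ _
      _ = C⁻¹ * (C * Y) := by rw [h]
      _ = C⁻¹ * C * Y := (Matrix.mul_assoc _ _ _).symm
      _ = Y := by rw [hCinv, Matrix.one_mul]
  have cancelR : ∀ X Y : Matrix (Fin n) (Fin n) ℝ, X * C = Y * C → X = Y := by
    intro X Y h
    calc X = X * (C * C⁻¹) := by rw [hCinv', Matrix.mul_one]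
      _ = X * C * C⁻¹ := (Matrix.mul_assoc _ _ _).symm
      _ = Y * C * C⁻¹ := by rw [h]
      _ = Y * (C * C⁻¹) := Matrix.mul_assoc _ _ _
      _ = Y := by rw [hCinv', Matrix.mul_one]
  -- A = Z*M*Z + lam • Z
  have hAexp : A = Z * M * Z + lam • Z := by
    rw [hA]
    simp only [Matrix.mul_add, Matrix.add_mul, Matrix.mul_smul, Matrix.smul_mul,
      Matrix.mul_one, Matrix.one_mul]
    rw [hZidem]
  -- A = C * Z = Z * C
  have hACZ : C * Z = A := by
    rw [hAexp, hC, Matrix.add_mul, Matrix.smul_mul, Matrix.one_mul,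
      Matrix.mul_assoc (Z * M) Z Z, hZidem, add_comm]
  have hAZC : Z * C = A := by
    rw [hAexp, hC, Matrix.mul_add, Matrix.mul_smul, Matrix.mul_one,
      ← Matrix.mul_assoc Z (Z * M) Z, ← Matrix.mul_assoc Z Z M, hZidem, add_comm]
  have hAsym : Aᵀ = A := by
    rw [hA]
    simp only [Matrix.transpose_mul, Matrix.transpose_add, Matrix.transpose_smul,
      Matrix.transpose_one, hZsym, hMsym]
    rw [Matrix.mul_assoc]
  have hAZ : A * Z = A := by rw [← hACZ, Matrix.mul_assoc, hZidem]
  have hZA : Z * A = A := by rw [← hAZC, ← Matrix.mul_assoc, hZidem]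
  -- Z * B * A = Z
  have hZBA : Z * B * A = Z := by
    refine cancelL _ _ ?_
    calc C * (Z * B * A) = C * Z * B * A := by rw [Matrix.mul_assoc C Z B, Matrix.mul_assoc C (Z*B) A]
      _ = A * B * A := by rw [hACZ]
      _ = A := h1
      _ = C * Z := hACZ.symm
  -- B * A = Z
  have hBA : B * A = Z := by
    have ht : A * (Bᵀ * Z) = Z := by
      have h := congrArg Matrix.transpose hZBA
      rwa [Matrix.transpose_mul, Matrix.transpose_mul, hZsym, hAsym] at h
    have hABt : A * Bᵀ = B * A := by
      have h := Matrix.transpose_mul B A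
      rw [h4, hAsym] at h
      exact h.symm
    rw [← Matrix.mul_assoc, hABt, Matrix.mul_assoc, hAZ] at ht
    exact ht
  -- A * B * Z = Z
  have hABZ : A * B * Z = Z := by
    refine cancelR _ _ ?_
    calc A * B * Z * C = A * B * (Z * C) := Matrix.mul_assoc _ _ _
      _ = A * B * A := by rw [hAZC]
      _ = A := h1
      _ = Z * C := hAZC.symm
  -- A * B = Z
  have hAB : A * B = Z := by
    have hABt : A * B = Bᵀ * A := by
      have h := Matrix.transpose_mul A B
      rw [h3, hAsym] at h
      exact h
    have ht : Bᵀ * A * Z = Z := by rw [← hABt]; exact hABZ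
    rw [Matrix.mul_assoc, hAZ, ← hABt] at ht
    exact ht
  -- B * Z = B and Z * B = B
  have hBZ : B * Z = B := by
    have h := h2
    rw [Matrix.mul_assoc, hAB] at h
    exact h
  have hZB : Z * B = B := by
    have h := h2
    rw [hBA] at h
    exact h
  -- C * B = Z, hence B = C⁻¹ * Z
  have hCB : C * B = Z := by
    rw [← hZB, ← Matrix.mul_assoc, hACZ, hAB]
  rw [hBZ]
  calc B = C⁻¹ * C * B := by rw [hCinv, Matrix.one_mul]
    _ = C⁻¹ * (C * B) := Matrix.mul_assoc _ _ _
    _ = C⁻¹ * Z := by rw [hCB]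
end

section
/- Let n ∈ ℕ, λ > 0, let M ∈ ℝ^{n×n} be a symmetric positive semidefinite matrix, and let μ ∈ ℝⁿ. Then the function f : ℝⁿ → ℝ defined on the unit cube by f(z) = −(1/2) μᵀ(λI + diag(z)M)^{-1} diag(z) μ is a convex function on [0,1]ⁿ. -/
open Matrix

namespace ObjectiveConvexAux

variable {n : ℕ}

/-- The matrix `λI + diag(z) M`. -/
noncomputable def Amat (lam : ℝ) (M : Matrix (Fin n) (Fin n) ℝ) (z : Fin n → ℝ) :
    Matrix (Fin n) (Fin n) ℝ :=
  lam • (1 : Matrix (Fin n) (Fin n) ℝ) + Matrix.diagonal z * M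

/-- The optimizer `β₀ = (λI + diag(z) M)⁻¹ diag(z) μ`. -/
noncomputable def beta0 (lam : ℝ) (M : Matrix (Fin n) (Fin n) ℝ) (z μ : Fin n → ℝ) :
    Fin n → ℝ :=
  (Amat lam M z)⁻¹ *ᵥ (Matrix.diagonal z *ᵥ μ)

/-- The auxiliary function, affine in `z`. -/
noncomputable def Ff (lam : ℝ) (M : Matrix (Fin n) (Fin n) ℝ) (μ z β : Fin n → ℝ) : ℝ :=
  -(1/(2*lam)) * ((μ - M *ᵥ β) ⬝ᵥ (z * (μ - M *ᵥ β))) - (1/2) * (β ⬝ᵥ (M *ᵥ β))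

lemma diag_mulVec (z v : Fin n → ℝ) : Matrix.diagonal z *ᵥ v = z * v := by
  funext i; simp [mulVec_diagonal]

lemma Amat_mulVec (lam : ℝ) (M : Matrix (Fin n) (Fin n) ℝ) (z x : Fin n → ℝ) :
    Amat lam M z *ᵥ x = lam • x + z * (M *ᵥ x) := by
  rw [Amat, add_mulVec, smul_mulVec, one_mulVec, ← mulVec_mulVec, diag_mulVec]

lemma dot_mul_comm (z a b : Fin n → ℝ) : a ⬝ᵥ (z * b) = (z * a) ⬝ᵥ b := by
  simp only [dotProduct, Pi.mul_apply]
  exact Finset.sum_congr rfl fun i _ => by ring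

lemma dot_symm {M : Matrix (Fin n) (Fin n) ℝ} (hsym : Mᵀ = M) (a b : Fin n → ℝ) :
    a ⬝ᵥ (M *ᵥ b) = (M *ᵥ a) ⬝ᵥ b := by
  rw [dotProduct_mulVec, ← mulVec_transpose, hsym]

lemma dot_z_nonneg {z : Fin n → ℝ} (hz : 0 ≤ z) (a : Fin n → ℝ) :
    0 ≤ a ⬝ᵥ (z * a) := by
  simp only [dotProduct, Pi.mul_apply]
  refine Finset.sum_nonneg fun i _ => ?_
  have h2 : a i * (z i * a i) = z i * (a i)^2 := by ring
  rw [h2]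
  exact mul_nonneg (by simpa using hz i) (sq_nonneg _)

lemma psd_nonneg {M : Matrix (Fin n) (Fin n) ℝ} (hM : M.PosSemidef) (a : Fin n → ℝ) :
    0 ≤ a ⬝ᵥ (M *ᵥ a) := by
  simpa using hM.dotProduct_mulVec_nonneg a

lemma sym_of_psd {M : Matrix (Fin n) (Fin n) ℝ} (hM : M.PosSemidef) : Mᵀ = M := by
  rw [← Matrix.conjTranspose_eq_transpose_of_trivial]
  exact hM.1

lemma isUnit_det {lam : ℝ} (hlam : 0 < lam) {M : Matrix (Fin n) (Fin n) ℝ}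
    (hM : M.PosSemidef) {z : Fin n → ℝ} (hz : 0 ≤ z) : IsUnit (Amat lam M z).det := by
  rw [← Matrix.isUnit_iff_isUnit_det, ← Matrix.mulVec_injective_iff_isUnit]
  have hker : ∀ x : Fin n → ℝ, (Amat lam M z) *ᵥ x = 0 → x = 0 := by
    intro x hx
    rw [Amat_mulVec] at hx
    have h0 : (M *ᵥ x) ⬝ᵥ (lam • x + z * (M *ᵥ x)) = 0 := by rw [hx]; simp
    rw [dotProduct_add, dotProduct_smul, smul_eq_mul] at h0
    have h1 : 0 ≤ (M *ᵥ x) ⬝ᵥ x := by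
      rw [dotProduct_comm]; exact psd_nonneg hM x
    have h2 : 0 ≤ (M *ᵥ x) ⬝ᵥ (z * (M *ᵥ x)) := dot_z_nonneg hz _
    have h4 : lam * ((M *ᵥ x) ⬝ᵥ x) = 0 :=
      le_antisymm (by linarith) (mul_nonneg hlam.le h1)
    have h3 : (M *ᵥ x) ⬝ᵥ x = 0 := (mul_eq_zero.mp h4).resolve_left hlam.ne'
    have hMx : M *ᵥ x = 0 := by
      refine (hM.dotProduct_mulVec_zero_iff x).mp ?_
      rw [star_trivial, dotProduct_comm]
      exact h3
    rw [hMx] at hx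
    have hx2 : lam • x = 0 := by simpa using hx
    exact (smul_eq_zero.mp hx2).resolve_left hlam.ne'
  intro x y hxy
  have h5 : (Amat lam M z) *ᵥ (x - y) = 0 := by
    rw [mulVec_sub, hxy, sub_self]
  exact sub_eq_zero.mp (hker _ h5)

lemma stationarity {lam : ℝ} (hlam : 0 < lam) {M : Matrix (Fin n) (Fin n) ℝ}
    (hM : M.PosSemidef) {z : Fin n → ℝ} (hz : 0 ≤ z) (μ : Fin n → ℝ) :
    z * (μ - M *ᵥ beta0 lam M z μ) = lam • beta0 lam M z μ := by
  have hAinv : Amat lam M z * (Amat lam M z)⁻¹ = 1 :=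
    Matrix.mul_nonsing_inv _ (isUnit_det hlam hM hz)
  have hA : (Amat lam M z) *ᵥ beta0 lam M z μ = z * μ := by
    rw [beta0, mulVec_mulVec, hAinv, one_mulVec, diag_mulVec]
  rw [Amat_mulVec] at hA
  funext i
  have h := congrFun hA i
  simp only [Pi.mul_apply, Pi.add_apply, Pi.smul_apply, smul_eq_mul, Pi.sub_apply] at h ⊢
  have h2 := mul_sub (z i) (μ i) ((M *ᵥ beta0 lam M z μ) i)
  linarith [h2, h]

/-- Value at the optimizer: `F(z, β₀) = -(1/2) μᵀ β₀`. -/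
lemma value {lam : ℝ} (hlam : 0 < lam) {M : Matrix (Fin n) (Fin n) ℝ}
    (hM : M.PosSemidef) {z : Fin n → ℝ} (hz : 0 ≤ z) (μ : Fin n → ℝ) :
    Ff lam M μ z (beta0 lam M z μ) = -(1/2) * (μ ⬝ᵥ beta0 lam M z μ) := by
  have hstat := stationarity hlam hM hz μ
  set β₀ := beta0 lam M z μ with hβ₀
  rw [Ff, hstat, dotProduct_smul, smul_eq_mul, sub_dotProduct,
    dotProduct_comm (M *ᵥ β₀) β₀]
  have hlam' : lam ≠ 0 := hlam.ne'
  field_simp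
  ring

/-- `F(z, β) ≤ F(z, β₀)` for every `β`. -/
lemma le_value {lam : ℝ} (hlam : 0 < lam) {M : Matrix (Fin n) (Fin n) ℝ}
    (hM : M.PosSemidef) {z : Fin n → ℝ} (hz : 0 ≤ z) (μ β : Fin n → ℝ) :
    Ff lam M μ z β ≤ Ff lam M μ z (beta0 lam M z μ) := by
  have hsym : Mᵀ = M := sym_of_psd hM
  have hstat := stationarity hlam hM hz μ
  set β₀ := beta0 lam M z μ with hβ₀
  set δ := β - β₀ with hδ
  have hβ : β = β₀ + δ := by rw [hδ]; ring
  set v₀ := μ - M *ᵥ β₀ with hv₀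
  have hv : μ - M *ᵥ β = v₀ - M *ᵥ δ := by
    rw [hβ, mulVec_add, hv₀]; ring
  -- expand the first quadratic term
  have e1 : (μ - M *ᵥ β) ⬝ᵥ (z * (μ - M *ᵥ β))
      = v₀ ⬝ᵥ (z * v₀) - 2 * lam * (β₀ ⬝ᵥ (M *ᵥ δ))
        + (M *ᵥ δ) ⬝ᵥ (z * (M *ᵥ δ)) := by
    rw [hv]
    have hz1 : z * (v₀ - M *ᵥ δ) = z * v₀ - z * (M *ᵥ δ) := by
      funext i; exact mul_sub (z i) (v₀ i) ((M *ᵥ δ) i)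
    rw [hz1, sub_dotProduct, dotProduct_sub, dotProduct_sub]
    have ha : v₀ ⬝ᵥ (z * (M *ᵥ δ)) = lam * (β₀ ⬝ᵥ (M *ᵥ δ)) := by
      rw [dot_mul_comm, hstat, smul_dotProduct, smul_eq_mul]
    have hb : (M *ᵥ δ) ⬝ᵥ (z * v₀) = lam * (β₀ ⬝ᵥ (M *ᵥ δ)) := by
      rw [hstat, dotProduct_smul, smul_eq_mul, dotProduct_comm]
    rw [ha, hb]
    ring
  -- expand the second quadratic term
  have e2 : β ⬝ᵥ (M *ᵥ β)
      = β₀ ⬝ᵥ (M *ᵥ β₀) + 2 * (β₀ ⬝ᵥ (M *ᵥ δ)) + δ ⬝ᵥ (M *ᵥ δ) := by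
    rw [hβ, mulVec_add, add_dotProduct, dotProduct_add, dotProduct_add]
    have h6 : δ ⬝ᵥ (M *ᵥ β₀) = β₀ ⬝ᵥ (M *ᵥ δ) := by
      rw [dot_symm hsym, dotProduct_comm]
    rw [h6]
    ring
  have ht : 0 ≤ (M *ᵥ δ) ⬝ᵥ (z * (M *ᵥ δ)) := dot_z_nonneg hz _
  have hs : 0 ≤ δ ⬝ᵥ (M *ᵥ δ) := psd_nonneg hM δ
  rw [Ff, Ff, e1, e2, ← hv₀]
  set P := v₀ ⬝ᵥ (z * v₀)
  set R := β₀ ⬝ᵥ (M *ᵥ δ)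
  set S := δ ⬝ᵥ (M *ᵥ δ)
  set T := (M *ᵥ δ) ⬝ᵥ (z * (M *ᵥ δ))
  set Q := β₀ ⬝ᵥ (M *ᵥ β₀)
  have hlam' : lam ≠ 0 := hlam.ne'
  have heq : -(1/(2*lam)) * (P - 2*lam*R + T) - (1/2) * (Q + 2*R + S)
      = (-(1/(2*lam)) * P - (1/2) * Q) - (1/(2*lam)) * T - (1/2) * S := by
    field_simp
    ring
  rw [heq]
  have hT : 0 ≤ (1/(2*lam)) * T := mul_nonneg (by positivity) ht
  linarith

/-- `F` is affine in `z`. -/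
lemma affine (lam : ℝ) (M : Matrix (Fin n) (Fin n) ℝ) (μ β z w : Fin n → ℝ)
    {a b : ℝ} (hab : a + b = 1) :
    Ff lam M μ (a • z + b • w) β = a * Ff lam M μ z β + b * Ff lam M μ w β := by
  rw [Ff, Ff, Ff]
  have hsplit : (a • z + b • w) * (μ - M *ᵥ β)
      = a • (z * (μ - M *ᵥ β)) + b • (w * (μ - M *ᵥ β)) := by
    funext i; simp; ring
  rw [hsplit, dotProduct_add, dotProduct_smul, dotProduct_smul]
  simp only [smul_eq_mul]
  have hb1 : b = 1 - a := by linarith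
  rw [hb1]; ring

end ObjectiveConvexAux

open ObjectiveConvexAux in
theorem objective_convex (n : ℕ) (lam : ℝ) (hlam : 0 < lam)
    (M : Matrix (Fin n) (Fin n) ℝ) (hM : M.PosSemidef) (μ : Fin n → ℝ) :
    ConvexOn ℝ (Set.Icc (0 : Fin n → ℝ) 1)
      (fun z : Fin n → ℝ =>
        -(1 / 2) * (μ ⬝ᵥ ((lam • (1 : Matrix (Fin n) (Fin n) ℝ) +
          Matrix.diagonal z * M)⁻¹ *ᵥ (Matrix.diagonal z *ᵥ μ)))) := by
  have key : ∀ z : Fin n → ℝ, 0 ≤ z →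
      -(1 / 2) * (μ ⬝ᵥ ((lam • (1 : Matrix (Fin n) (Fin n) ℝ) +
          Matrix.diagonal z * M)⁻¹ *ᵥ (Matrix.diagonal z *ᵥ μ)))
      = Ff lam M μ z (beta0 lam M z μ) := by
    intro z hz
    rw [value hlam hM hz μ]
    rfl
  constructor
  · exact convex_Icc _ _
  · intro z hz w hw a b ha hb hab
    have hz0 : (0 : Fin n → ℝ) ≤ z := hz.1
    have hw0 : (0 : Fin n → ℝ) ≤ w := hw.1
    have hc0 : (0 : Fin n → ℝ) ≤ a • z + b • w := by
      intro i
      simp only [Pi.add_apply, Pi.smul_apply, smul_eq_mul, Pi.zero_apply]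
      have h1 := hz0 i; have h2 := hw0 i
      simp only [Pi.zero_apply] at h1 h2
      positivity
    simp only [smul_eq_mul]
    rw [key _ hc0, key _ hz0, key _ hw0]
    set β₀ := beta0 lam M (a • z + b • w) μ with hβ₀
    have h1 : Ff lam M μ (a • z + b • w) β₀
        = a * Ff lam M μ z β₀ + b * Ff lam M μ w β₀ := affine lam M μ β₀ z w hab
    have h2 : Ff lam M μ z β₀ ≤ Ff lam M μ z (beta0 lam M z μ) := le_value hlam hM hz0 μ β₀
    have h3 : Ff lam M μ w β₀ ≤ Ff lam M μ w (beta0 lam M w μ) := le_value hlam hM hw0 μ β₀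
    rw [h1]
    have h4 := mul_le_mul_of_nonneg_left h2 ha
    have h5 := mul_le_mul_of_nonneg_left h3 hb
    linarith
end

section
/- Let n ∈ ℕ, λ > 0, let M ∈ ℝ^{n×n} be a symmetric positive semidefinite matrix, and let z ∈ ℝⁿ have nonnegative entries with Z = diag(z). Then for every x ∈ ℝⁿ, xᵀ M (λI + ZM)^{-1} x ≥ 0. -/
open Matrix

theorem quadratic_form_nonneg (n : ℕ) (lam : ℝ) (hlam : 0 < lam)
    (M : Matrix (Fin n) (Fin n) ℝ) (hM : M.PosSemidef)
    (z : Fin n → ℝ) (hz : ∀ i, 0 ≤ z i) (x : Fin n → ℝ) :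
    0 ≤ x ⬝ᵥ (M *ᵥ ((lam • (1 : Matrix (Fin n) (Fin n) ℝ) +
      Matrix.diagonal z * M)⁻¹ *ᵥ x)) := by
  set A := lam • (1 : Matrix (Fin n) (Fin n) ℝ) + Matrix.diagonal z * M with hAdef
  have hAvec : ∀ w : Fin n → ℝ, A *ᵥ w = lam • w + Matrix.diagonal z *ᵥ (M *ᵥ w) := by
    intro w
    rw [hAdef, add_mulVec, smul_mulVec, one_mulVec, ← mulVec_mulVec]
  have hdiag : ∀ v : Fin n → ℝ, 0 ≤ (Matrix.diagonal z *ᵥ v) ⬝ᵥ v := by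
    intro v
    rw [dotProduct]
    refine Finset.sum_nonneg fun i _ => ?_
    rw [mulVec_diagonal]
    have := mul_self_nonneg (v i)
    nlinarith [hz i, mul_self_nonneg (v i)]
  have hMq : ∀ v : Fin n → ℝ, 0 ≤ v ⬝ᵥ (M *ᵥ v) := by
    intro v
    simpa using hM.dotProduct_mulVec_nonneg v
  -- A has trivial kernel
  have hker : ∀ w : Fin n → ℝ, A *ᵥ w = 0 → w = 0 := by
    intro w hw
    rw [hAvec] at hw
    have h1 : (lam • w + Matrix.diagonal z *ᵥ (M *ᵥ w)) ⬝ᵥ (M *ᵥ w) = 0 := by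
      rw [hw, zero_dotProduct]
    rw [add_dotProduct, smul_dotProduct] at h1
    have h2 : 0 ≤ w ⬝ᵥ (M *ᵥ w) := hMq w
    have h3 : 0 ≤ (Matrix.diagonal z *ᵥ (M *ᵥ w)) ⬝ᵥ (M *ᵥ w) := hdiag _
    rw [smul_eq_mul] at h1
    have h4 : w ⬝ᵥ (M *ᵥ w) = 0 := by nlinarith
    have h5 : M *ᵥ w = 0 := by
      have := (hM.dotProduct_mulVec_zero_iff w).mp (by simpa using h4)
      exact this
    rw [h5, mulVec_zero, add_zero] at hw
    have : w = 0 := by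
      funext i
      have := congrFun hw i
      simp only [Pi.smul_apply, Pi.zero_apply, smul_eq_mul] at this
      exact (mul_eq_zero.mp this).resolve_left (ne_of_gt hlam)
    exact this
  have hinj : Function.Injective A.mulVec := by
    intro u v huv
    have : A *ᵥ (u - v) = 0 := by rw [mulVec_sub, huv, sub_self]
    have := hker _ this
    exact sub_eq_zero.mp this
  have hU : IsUnit A := mulVec_injective_iff_isUnit.mp hinj
  have hdet : IsUnit A.det := (isUnit_iff_isUnit_det A).mp hU
  set y := A⁻¹ *ᵥ x with hy
  have hx : A *ᵥ y = x := by
    rw [hy, mulVec_mulVec, mul_nonsing_inv _ hdet, one_mulVec]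
  calc (0:ℝ) ≤ lam * (y ⬝ᵥ (M *ᵥ y)) + (Matrix.diagonal z *ᵥ (M *ᵥ y)) ⬝ᵥ (M *ᵥ y) := by
        have := hMq y
        have := hdiag (M *ᵥ y)
        nlinarith
    _ = (A *ᵥ y) ⬝ᵥ (M *ᵥ y) := by rw [hAvec, add_dotProduct, smul_dotProduct]; simp
    _ = x ⬝ᵥ (M *ᵥ y) := by rw [hx]
end

section
/- Let n ∈ ℕ, λ > 0, let M ∈ ℝ^{n×n} be a symmetric positive semidefinite matrix, let μ ∈ ℝⁿ, let z ∈ {0,1}ⁿ be a binary vector, and let Z = diag(z). Define β* = (λI + ZM)^{-1}Zμ. Then Zβ* = β* and Z(M + λI)Z β* = Zμ. -/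
open Matrix

theorem beta_star_normal_equations (n : ℕ) (lam : ℝ) (hlam : 0 < lam)
    (M : Matrix (Fin n) (Fin n) ℝ) (hM : M.PosSemidef) (μ : Fin n → ℝ)
    (z : Fin n → ℝ) (hz : ∀ i, z i = 0 ∨ z i = 1)
    (Z : Matrix (Fin n) (Fin n) ℝ) (hZ : Z = Matrix.diagonal z)
    (βstar : Fin n → ℝ)
    (hβ : βstar = (lam • (1 : Matrix (Fin n) (Fin n) ℝ) + Z * M)⁻¹ *ᵥ (Z *ᵥ μ)) :
    Z *ᵥ βstar = βstar ∧
    (Z * (M + lam • (1 : Matrix (Fin n) (Fin n) ℝ)) * Z) *ᵥ βstar = Z *ᵥ μ := by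
  set A : Matrix (Fin n) (Fin n) ℝ := lam • (1 : Matrix (Fin n) (Fin n) ℝ) + Z * M with hA
  have hZZ : Z * Z = Z := by
    subst hZ
    ext i j
    rw [Matrix.diagonal_mul_diagonal]
    rcases hz i with h | h <;> simp [Matrix.diagonal_apply, h]
  have hZsym : Zᵀ = Z := by subst hZ; simp
  have hAmul : ∀ x, A *ᵥ x = lam • x + (Z * M) *ᵥ x := by
    intro x
    rw [hA, Matrix.add_mulVec, Matrix.smul_mulVec, Matrix.one_mulVec]
  -- kernel of A is trivial
  have hker : ∀ x, A *ᵥ x = 0 → x = 0 := by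
    intro x hx
    rw [hAmul] at hx
    have hzx : Z *ᵥ x = x := by
      have h2 : Z *ᵥ (lam • x + (Z * M) *ᵥ x) = 0 := by rw [hx]; simp
      rw [Matrix.mulVec_add, Matrix.mulVec_smul, Matrix.mulVec_mulVec, ← Matrix.mul_assoc,
        hZZ] at h2
      have h4 : lam • (Z *ᵥ x) + (Z * M) *ᵥ x = lam • x + (Z * M) *ᵥ x := h2.trans hx.symm
      have h3 : lam • (Z *ᵥ x) = lam • x := add_right_cancel h4
      exact smul_right_injective (Fin n → ℝ) (ne_of_gt hlam) h3
    have h4 : x ⬝ᵥ (lam • x + (Z * M) *ᵥ x) = 0 := by rw [hx]; simp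
    have hvz : x ᵥ* Z = x := by rw [← hZsym, Matrix.vecMul_transpose, hzx]
    have h5 : x ⬝ᵥ (Z * M) *ᵥ x = x ⬝ᵥ M *ᵥ x := by
      rw [← Matrix.mulVec_mulVec, Matrix.dotProduct_mulVec x Z, hvz]
    rw [dotProduct_add, dotProduct_smul, h5] at h4
    have hnn : (0:ℝ) ≤ x ⬝ᵥ M *ᵥ x := by simpa using hM.dotProduct_mulVec_nonneg x
    have hxx : x ⬝ᵥ x ≤ 0 := by
      have hsm : lam • (x ⬝ᵥ x) = lam * (x ⬝ᵥ x) := rfl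
      nlinarith [h4, hsm]
    have : x ⬝ᵥ x = 0 := le_antisymm hxx (by simpa using dotProduct_self_star_nonneg x)
    exact dotProduct_self_eq_zero.mp this
  have hinj : Function.Injective A.mulVec := by
    intro x y hxy
    have : A *ᵥ (x - y) = 0 := by rw [Matrix.mulVec_sub, hxy, sub_self]
    exact sub_eq_zero.mp (hker _ this)
  have hU : IsUnit A := Matrix.mulVec_injective_iff_isUnit.mp hinj
  have hAβ : lam • βstar + (Z * M) *ᵥ βstar = Z *ᵥ μ := by
    rw [← hAmul, hβ, Matrix.mulVec_mulVec, Matrix.mul_nonsing_inv _ (hU.map Matrix.detMonoidHom),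
      Matrix.one_mulVec]
  -- Z βstar = βstar
  have hZβ : Z *ᵥ βstar = βstar := by
    have h2 : Z *ᵥ (lam • βstar + (Z * M) *ᵥ βstar) = Z *ᵥ (Z *ᵥ μ) := by rw [hAβ]
    rw [Matrix.mulVec_add, Matrix.mulVec_smul, Matrix.mulVec_mulVec, ← Matrix.mul_assoc, hZZ,
      Matrix.mulVec_mulVec, hZZ] at h2
    have h4 : lam • (Z *ᵥ βstar) + (Z * M) *ᵥ βstar = lam • βstar + (Z * M) *ᵥ βstar :=
      h2.trans hAβ.symm
    exact smul_right_injective (Fin n → ℝ) (ne_of_gt hlam) (add_right_cancel h4)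
  refine ⟨hZβ, ?_⟩
  have hmat : Z * (M + lam • (1 : Matrix (Fin n) (Fin n) ℝ)) * Z = Z * M * Z + lam • Z := by
    rw [Matrix.mul_add, Matrix.add_mul, Matrix.mul_smul, Matrix.mul_one, Matrix.smul_mul, hZZ]
  rw [hmat, Matrix.add_mulVec, Matrix.smul_mulVec, ← Matrix.mulVec_mulVec, hZβ]
  rw [add_comm]
  exact hAβ
end

section
/- Let n ∈ ℕ, λ > 0, let M ∈ ℝ^{n×n} be a symmetric positive semidefinite matrix, let μ ∈ ℝⁿ, let z ∈ {0,1}ⁿ be a binary vector, and let Z = diag(z). Define β* = (λI + ZM)^{-1}Zμ. Then β* minimizes the function g(β) = (1/2)βᵀ(Z(M + λI)Z)β − (Zμ)ᵀβ over β ∈ ℝⁿ, i.e., g(β) ≥ g(β*) for all β ∈ ℝⁿ, and the minimum value satisfies g(β*) = −(1/2) μᵀβ*. -/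
open Matrix

theorem beta_star_minimizes (n : ℕ) (lam : ℝ) (hlam : 0 < lam)
    (M : Matrix (Fin n) (Fin n) ℝ) (hM : M.PosSemidef) (μ : Fin n → ℝ)
    (z : Fin n → ℝ) (hz : ∀ i, z i = 0 ∨ z i = 1)
    (Z : Matrix (Fin n) (Fin n) ℝ) (hZ : Z = Matrix.diagonal z)
    (βstar : Fin n → ℝ)
    (hβ : βstar = (lam • (1 : Matrix (Fin n) (Fin n) ℝ) + Z * M)⁻¹ *ᵥ (Z *ᵥ μ))
    (g : (Fin n → ℝ) → ℝ)
    (hg : g = fun β : Fin n → ℝ =>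
      (1 / 2) * (β ⬝ᵥ ((Z * (M + lam • (1 : Matrix (Fin n) (Fin n) ℝ)) * Z) *ᵥ β))
        - (Z *ᵥ μ) ⬝ᵥ β) :
    (∀ β : Fin n → ℝ, g βstar ≤ g β) ∧ g βstar = -(1 / 2) * (μ ⬝ᵥ βstar) := by
  have hZZ : Z * Z = Z := by
    have h : (fun i => z i * z i) = z := by
      funext i; rcases hz i with h | h <;> rw [h] <;> ring
    rw [hZ, diagonal_mul_diagonal, h]
  have hZT : Zᵀ = Z := by rw [hZ]; exact diagonal_transpose z
  have hMT : Mᵀ = M := hM.1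
  have hself : ∀ v : Fin n → ℝ, 0 ≤ v ⬝ᵥ v :=
    fun v => Finset.sum_nonneg fun i _ => mul_self_nonneg _
  set A := lam • (1 : Matrix (Fin n) (Fin n) ℝ) + Z * M with hAdef
  set Q := Z * (M + lam • (1 : Matrix (Fin n) (Fin n) ℝ)) * Z with hQdef
  set c := Z *ᵥ μ with hcdef
  have hZv : ∀ v, Z *ᵥ (Z *ᵥ v) = Z *ᵥ v := fun v => by rw [mulVec_mulVec, hZZ]
  have hdotZ : ∀ v w : Fin n → ℝ, v ⬝ᵥ (Z *ᵥ w) = (Z *ᵥ v) ⬝ᵥ w := fun v w => by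
    rw [dotProduct_mulVec, ← mulVec_transpose, hZT]
  have hMnn : ∀ x : Fin n → ℝ, 0 ≤ x ⬝ᵥ (M *ᵥ x) := by
    intro x
    have := hM.dotProduct_mulVec_nonneg x
    simpa using this
  -- A *ᵥ x expansion
  have hAv : ∀ x, A *ᵥ x = lam • x + Z *ᵥ (M *ᵥ x) := by
    intro x
    rw [hAdef, add_mulVec, smul_mulVec, one_mulVec, ← mulVec_mulVec]
  -- injectivity of A
  have hinj : ∀ x, A *ᵥ x = 0 → x = 0 := by
    intro x hx
    rw [hAv] at hx
    have hx2 : lam • (Z *ᵥ x) + Z *ᵥ (M *ᵥ x) = 0 := by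
      have h := congrArg (fun v => Z *ᵥ v) hx
      simp only [mulVec_add, mulVec_smul, hZv, mulVec_zero] at h
      exact h
    have hZx : Z *ᵥ x = x := by
      have h3 : lam • (Z *ᵥ x) = lam • x := by
        have h4 := hx2.trans hx.symm
        simpa [add_left_inj] using h4
      exact smul_right_injective (Fin n → ℝ) (ne_of_gt hlam) h3
    have h0 : x ⬝ᵥ (lam • x + Z *ᵥ (M *ᵥ x)) = 0 := by rw [hx]; simp
    rw [dotProduct_add, dotProduct_smul, hdotZ, hZx] at h0
    simp only [smul_eq_mul] at h0
    have h1 := hself x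
    have h2 := hMnn x
    have hxx : x ⬝ᵥ x = 0 := by nlinarith
    exact dotProduct_self_eq_zero.mp hxx
  have hdet : IsUnit A.det := by
    rw [isUnit_iff_ne_zero]
    intro hd
    obtain ⟨v, hv0, hv⟩ := (Matrix.exists_mulVec_eq_zero_iff).mpr hd
    exact hv0 (hinj v hv)
  have hAβ : A *ᵥ βstar = c := by
    rw [hβ, mulVec_mulVec, Matrix.mul_nonsing_inv A hdet, one_mulVec]
  rw [hAv] at hAβ
  -- Z βstar = βstar
  have hZβ : Z *ᵥ βstar = βstar := by
    have h2 : lam • (Z *ᵥ βstar) + Z *ᵥ (M *ᵥ βstar) = c := by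
      have h := congrArg (fun v => Z *ᵥ v) hAβ
      simp only [mulVec_add, mulVec_smul, hZv] at h
      exact h.trans (by rw [hcdef, hZv])
    have h3 : lam • (Z *ᵥ βstar) = lam • βstar := by
      have h4 := h2.trans hAβ.symm
      simpa [add_left_inj] using h4
    exact smul_right_injective (Fin n → ℝ) (ne_of_gt hlam) h3
  -- Q βstar = c
  have hQβ : Q *ᵥ βstar = c := by
    have h : Q *ᵥ βstar = Z *ᵥ ((M + lam • 1) *ᵥ (Z *ᵥ βstar)) := by
      rw [hQdef, ← mulVec_mulVec, ← mulVec_mulVec]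
    rw [h, hZβ, add_mulVec, smul_mulVec, one_mulVec, mulVec_add, mulVec_smul, hZβ]
    rw [← hAβ]
    abel
  -- Q psd
  have hQnn : ∀ x : Fin n → ℝ, 0 ≤ x ⬝ᵥ (Q *ᵥ x) := by
    intro x
    have hrw : x ⬝ᵥ (Q *ᵥ x) = (Z *ᵥ x) ⬝ᵥ (M *ᵥ (Z *ᵥ x)) + lam * ((Z *ᵥ x) ⬝ᵥ (Z *ᵥ x)) := by
      rw [hQdef, ← mulVec_mulVec, ← mulVec_mulVec, hdotZ, add_mulVec, smul_mulVec,
        one_mulVec, dotProduct_add, dotProduct_smul, smul_eq_mul]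
    rw [hrw]
    have h1 := hMnn (Z *ᵥ x)
    have h2 := hself (Z *ᵥ x)
    nlinarith
  -- Q symmetric
  have hQsymm : ∀ v w : Fin n → ℝ, v ⬝ᵥ (Q *ᵥ w) = w ⬝ᵥ (Q *ᵥ v) := by
    intro v w
    have hQT : Qᵀ = Q := by
      rw [hQdef, transpose_mul, transpose_mul, hZT, transpose_add, hMT, transpose_smul,
        transpose_one, Matrix.mul_assoc]
    rw [dotProduct_mulVec, ← mulVec_transpose, hQT, dotProduct_comm]
  have hgβ : ∀ β, g β = (1 / 2) * (β ⬝ᵥ (Q *ᵥ β)) - c ⬝ᵥ β := by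
    intro β; rw [hg]
  have e2 : c ⬝ᵥ βstar = βstar ⬝ᵥ (Q *ᵥ βstar) := by
    rw [← hQβ, dotProduct_comm]
  constructor
  · intro β
    rw [hgβ, hgβ]
    have e1 : c ⬝ᵥ β = βstar ⬝ᵥ (Q *ᵥ β) := by
      rw [← hQβ, dotProduct_comm, hQsymm]
    have expand : (β - βstar) ⬝ᵥ (Q *ᵥ (β - βstar)) =
        β ⬝ᵥ (Q *ᵥ β) - β ⬝ᵥ (Q *ᵥ βstar) - (βstar ⬝ᵥ (Q *ᵥ β) - βstar ⬝ᵥ (Q *ᵥ βstar)) := by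
      rw [mulVec_sub, dotProduct_sub, sub_dotProduct, sub_dotProduct]
      ring
    have e3 := hQsymm β βstar
    have h4 := hQnn (β - βstar)
    linarith
  · have h1 : c ⬝ᵥ βstar = μ ⬝ᵥ βstar := by
      rw [hcdef, dotProduct_comm, hdotZ, hZβ, dotProduct_comm]
    rw [hgβ]
    linarith
end

section
/- Let n ∈ ℕ, λ > 0, let M ∈ ℝ^{n×n} be a symmetric positive semidefinite matrix, and let μ ∈ ℝⁿ. Define c(z) = −(1/2) μᵀ K(z)^{-1} diag(z) μ where K(z) = λI + diag(z)M, for z in the open set U = {z ∈ ℝⁿ : K(z) is invertible}. Then for every z ∈ U with zᵢ ≥ 0 for all i, and every index i ∈ {1,…,n}, the partial derivative of c with respect to zᵢ exists and equals (1/2) μᵀ K(z)^{-1} ( Eᵢ M K(z)^{-1} diag(z) − Eᵢ ) μ, where Eᵢ ∈ ℝ^{n×n} is the matrix with a 1 in entry (i,i) and zeros elsewhere. -/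
open Matrix

attribute [local instance] Matrix.linftyOpNormedRing Matrix.linftyOpNormedAlgebra

theorem gradient_formula (n : ℕ) (lam : ℝ) (hlam : 0 < lam)
    (M : Matrix (Fin n) (Fin n) ℝ) (hM : M.PosSemidef) (μ : Fin n → ℝ)
    (z : Fin n → ℝ)
    (hzU : IsUnit (lam • (1 : Matrix (Fin n) (Fin n) ℝ) + Matrix.diagonal z * M))
    (hznn : ∀ i, 0 ≤ z i) (i : Fin n) :
    HasDerivAt
      (fun s : ℝ =>
        -(1 / 2) * (μ ⬝ᵥ ((lam • (1 : Matrix (Fin n) (Fin n) ℝ) +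
          Matrix.diagonal (Function.update z i s) * M)⁻¹ *ᵥ
            (Matrix.diagonal (Function.update z i s) *ᵥ μ))))
      ((1 / 2) * (μ ⬝ᵥ ((lam • (1 : Matrix (Fin n) (Fin n) ℝ) +
          Matrix.diagonal z * M)⁻¹ *ᵥ
        ((Matrix.single i i 1 * M *
            (lam • (1 : Matrix (Fin n) (Fin n) ℝ) + Matrix.diagonal z * M)⁻¹ *
              Matrix.diagonal z
          - Matrix.single i i 1) *ᵥ μ))))
      (z i) := by
  classical
  set E : Matrix (Fin n) (Fin n) ℝ := Matrix.single i i 1 with hE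
  set A : Matrix (Fin n) (Fin n) ℝ := E * M with hA
  set K : Matrix (Fin n) (Fin n) ℝ :=
    lam • (1 : Matrix (Fin n) (Fin n) ℝ) + Matrix.diagonal z * M with hK
  have hDiag : ∀ s : ℝ, Matrix.diagonal (Function.update z i s)
      = Matrix.diagonal z + (s - z i) • E := by
    intro s
    ext j k
    rcases eq_or_ne j k with rfl | hjk
    · rcases eq_or_ne j i with rfl | hij
      · rw [Matrix.diagonal_apply_eq, Matrix.add_apply, Matrix.smul_apply,
          Matrix.diagonal_apply_eq, Function.update_self, hE,
          Matrix.single_apply_same, smul_eq_mul]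
        ring
      · have hij' : ¬(i = j) := fun h => hij h.symm
        simp [hE, Matrix.single, Function.update_of_ne hij, hij']
    · have hcon : ¬(i = j ∧ i = k) := fun h => hjk (h.1.symm.trans h.2)
      simp [hE, Matrix.single, Matrix.diagonal_apply_ne _ hjk, hcon]
  have hKs : ∀ s : ℝ, lam • (1 : Matrix (Fin n) (Fin n) ℝ) +
      Matrix.diagonal (Function.update z i s) * M
      = (K - z i • A) + s • A := by
    intro s
    rw [hDiag, add_mul, smul_mul_assoc, hK, sub_smul, ← hA]
    abel
  have hKder : HasDerivAt (fun s : ℝ => lam • (1 : Matrix (Fin n) (Fin n) ℝ) +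
      Matrix.diagonal (Function.update z i s) * M) A (z i) := by
    have h1 : HasDerivAt (fun s : ℝ => (K - z i • A) + s • A) A (z i) := by
      exact (HasDerivAt.const_add (K - z i • A)
        (((hasDerivAt_id' (z i)).smul_const A))).congr_deriv (one_smul ℝ _)
    simpa only [← hKs] using h1
  have hDder : HasDerivAt (fun s : ℝ => Matrix.diagonal (Function.update z i s)) E (z i) := by
    have h1 : HasDerivAt (fun s : ℝ => Matrix.diagonal z + (s - z i) • E) E (z i) := by
      exact (HasDerivAt.const_add (Matrix.diagonal z)
        ((((hasDerivAt_id' (z i)).sub_const (z i)).smul_const E))).congr_deriv (one_smul ℝ _)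
    simpa only [← hDiag] using h1
  have hKzi : lam • (1 : Matrix (Fin n) (Fin n) ℝ) +
      Matrix.diagonal (Function.update z i (z i)) * M = K := by
    rw [Function.update_eq_self, hK]
  have huval : (hzU.unit : Matrix (Fin n) (Fin n) ℝ) = K := hzU.unit_spec
  have huinv : ((hzU.unit⁻¹ : _) : Matrix (Fin n) (Fin n) ℝ) = K⁻¹ := by
    have h := Ring.inverse_unit hzU.unit
    rw [huval] at h
    rw [Matrix.nonsing_inv_eq_ringInverse, ← h]
  have hInv : HasDerivAt (fun s : ℝ => Ring.inverse (lam • (1 : Matrix (Fin n) (Fin n) ℝ) +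
      Matrix.diagonal (Function.update z i s) * M)) (-(K⁻¹ * A * K⁻¹)) (z i) := by
    have hF := hasFDerivAt_ringInverse (𝕜 := ℝ) hzU.unit
    rw [huval] at hF
    have hF' : HasFDerivAt Ring.inverse
        (-((ContinuousLinearMap.mulLeftRight ℝ (Matrix (Fin n) (Fin n) ℝ))
          (hzU.unit⁻¹ : _)) (hzU.unit⁻¹ : _))
        ((fun s : ℝ => lam • (1 : Matrix (Fin n) (Fin n) ℝ) +
          Matrix.diagonal (Function.update z i s) * M) (z i)) := by
      simp only [Function.update_eq_self]
      exact hF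
    have hcomp := hF'.comp_hasDerivAt (z i) hKder
    simp [Function.comp, huinv] at hcomp
    exact hcomp
  have hP : HasDerivAt (fun s : ℝ =>
      Ring.inverse (lam • (1 : Matrix (Fin n) (Fin n) ℝ) +
        Matrix.diagonal (Function.update z i s) * M) * Matrix.diagonal (Function.update z i s))
      ((-(K⁻¹ * A * K⁻¹)) * Matrix.diagonal z + K⁻¹ * E) (z i) := by
    have h2 := hInv.mul hDder
    have h3 : Ring.inverse (lam • (1 : Matrix (Fin n) (Fin n) ℝ) +
        Matrix.diagonal (Function.update z i (z i)) * M) = K⁻¹ := by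
      rw [hKzi, ← Matrix.nonsing_inv_eq_ringInverse]
    rw [h3, Function.update_eq_self] at h2
    exact h2
  let ψ : Matrix (Fin n) (Fin n) ℝ →ₗ[ℝ] ℝ :=
    { toFun := fun B => μ ⬝ᵥ (B *ᵥ μ)
      map_add' := fun B C => by simp [Matrix.add_mulVec]
      map_smul' := fun c B => by simp [Matrix.smul_mulVec] }
  have hψ : HasDerivAt (fun s : ℝ =>
      -(1 / 2) * ψ (Ring.inverse (lam • (1 : Matrix (Fin n) (Fin n) ℝ) +
        Matrix.diagonal (Function.update z i s) * M) * Matrix.diagonal (Function.update z i s)))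
      (-(1 / 2) * ψ ((-(K⁻¹ * A * K⁻¹)) * Matrix.diagonal z + K⁻¹ * E)) (z i) := by
    have hlin := (LinearMap.toContinuousLinearMap ψ).hasFDerivAt
      (x := (fun s : ℝ => Ring.inverse (lam • (1 : Matrix (Fin n) (Fin n) ℝ) +
        Matrix.diagonal (Function.update z i s) * M) *
          Matrix.diagonal (Function.update z i s)) (z i))
    have hcomp := hlin.comp_hasDerivAt (z i) hP
    have := hcomp.const_mul (-(1 / 2))
    exact this
  have hfun : (fun s : ℝ =>
        -(1 / 2) * (μ ⬝ᵥ ((lam • (1 : Matrix (Fin n) (Fin n) ℝ) +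
          Matrix.diagonal (Function.update z i s) * M)⁻¹ *ᵥ
            (Matrix.diagonal (Function.update z i s) *ᵥ μ))))
      = (fun s : ℝ =>
      -(1 / 2) * ψ (Ring.inverse (lam • (1 : Matrix (Fin n) (Fin n) ℝ) +
        Matrix.diagonal (Function.update z i s) * M) *
          Matrix.diagonal (Function.update z i s))) := by
    funext s
    simp only [ψ, LinearMap.coe_mk, AddHom.coe_mk, Matrix.mulVec_mulVec,
      Matrix.nonsing_inv_eq_ringInverse]
  have hval : ((1 / 2) * (μ ⬝ᵥ (K⁻¹ *ᵥ ((A * K⁻¹ * Matrix.diagonal z - E) *ᵥ μ))))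
      = -(1 / 2) * ψ ((-(K⁻¹ * A * K⁻¹)) * Matrix.diagonal z + K⁻¹ * E) := by
    have h1 : (-(K⁻¹ * A * K⁻¹)) * Matrix.diagonal z + K⁻¹ * E
        = -(K⁻¹ * (A * K⁻¹ * Matrix.diagonal z - E)) := by
      noncomm_ring
    rw [h1]
    simp only [ψ, LinearMap.coe_mk, AddHom.coe_mk, Matrix.mulVec_mulVec, Matrix.neg_mulVec,
      dotProduct_neg]
    rw [Matrix.mul_assoc]
    ring
  rw [hfun, hval]
  exact hψ
end

section
/- Let μ ∈ ℝ, m ≥ 0, λ > 0, and 0 < a ≤ 1. Then the function z ↦ −μ² zᵃ / (λ + m zᵃ) is convex on the interval [0, ∞). -/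
lemma g_convex (μ m lam : ℝ) (hm : 0 ≤ m) (hlam : 0 < lam) :
    ConvexOn ℝ (Set.Ici (0 : ℝ))
      (fun t : ℝ => -(μ ^ 2 * t) / (lam + m * t)) := by
  refine ⟨convex_Ici 0, fun x hx y hy p q hp hq hpq => ?_⟩
  simp only [Set.mem_Ici] at hx hy
  have hdx : 0 < lam + m * x := by positivity
  have hdy : 0 < lam + m * y := by positivity
  have hdz : 0 < lam + m * (p * x + q * y) := by positivity
  show -(μ ^ 2 * (p * x + q * y)) / (lam + m * (p * x + q * y)) ≤
      p • (-(μ ^ 2 * x) / (lam + m * x)) + q • (-(μ ^ 2 * y) / (lam + m * y))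
  rw [smul_eq_mul, smul_eq_mul,
    show p * (-(μ ^ 2 * x) / (lam + m * x)) + q * (-(μ ^ 2 * y) / (lam + m * y))
      = (p * (-(μ ^ 2 * x)) * (lam + m * y) + q * (-(μ ^ 2 * y)) * (lam + m * x))
        / ((lam + m * x) * (lam + m * y)) from by field_simp,
    div_le_div_iff₀ hdz (by positivity)]
  have hq1 : q = 1 - p := by linarith
  subst hq1
  nlinarith [mul_nonneg (mul_nonneg (mul_nonneg (mul_nonneg (mul_nonneg hp (by linarith : (0:ℝ) ≤ 1 - p)) hm) hlam.le)
    (sq_nonneg μ)) (sq_nonneg (x - y))]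

lemma g_antitone (μ m lam : ℝ) (hm : 0 ≤ m) (hlam : 0 < lam) :
    AntitoneOn (fun t : ℝ => -(μ ^ 2 * t) / (lam + m * t)) (Set.Ici (0 : ℝ)) := by
  intro x hx y hy hxy
  simp only [Set.mem_Ici] at hx hy
  have hdx : 0 < lam + m * x := by positivity
  have hdy : 0 < lam + m * y := by positivity
  show -(μ ^ 2 * y) / (lam + m * y) ≤ -(μ ^ 2 * x) / (lam + m * x)
  rw [div_le_div_iff₀ hdy hdx]
  nlinarith [mul_nonneg (mul_nonneg (sq_nonneg μ) hlam.le) (sub_nonneg.2 hxy)]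

theorem rpow_relaxation_convex (μ m lam a : ℝ) (hm : 0 ≤ m) (hlam : 0 < lam)
    (ha0 : 0 < a) (ha1 : a ≤ 1) :
    ConvexOn ℝ (Set.Ici (0 : ℝ))
      (fun z : ℝ => -(μ ^ 2 * z ^ a) / (lam + m * z ^ a)) := by
  have hconc : ConcaveOn ℝ (Set.Ici (0:ℝ)) (fun z : ℝ => z ^ a) :=
    Real.concaveOn_rpow ha0.le ha1
  have himg : (fun z : ℝ => z ^ a) '' Set.Ici (0:ℝ) = Set.Ici (0:ℝ) := by
    apply Set.Subset.antisymm
    · rintro _ ⟨z, hz, rfl⟩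
      exact Real.rpow_nonneg hz a
    · intro t ht
      exact ⟨t ^ a⁻¹, Real.rpow_nonneg ht _, Real.rpow_inv_rpow ht ha0.ne'⟩
  exact ConvexOn.comp_concaveOn
    (by rw [himg]; exact g_convex μ m lam hm hlam) hconc
    (by rw [himg]; exact g_antitone μ m lam hm hlam)
end

section
/- Let n ∈ ℕ, λ > 0, let M ∈ ℝ^{n×n} be a symmetric positive semidefinite matrix, let μ ∈ ℝⁿ, let z ∈ {0,1}ⁿ be a binary vector with support s = {i : zᵢ = 1}, and let Z = diag(z). Then μᵀ(λI + ZM)^{-1}Zμ = μ_sᵀ (λ I_s + M_{s,s})^{-1} μ_s, where μ_s ∈ ℝˢ is the restriction of μ to the coordinates in s, M_{s,s} is the principal submatrix of M on rows and columns in s, and I_s is the identity on ℝˢ. -/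
open Matrix

private lemma sum_ite_subtype_aux {n : ℕ} (z : Fin n → ℝ) (i : Fin n) (g : Fin n → ℝ) :
    ∑ j : {k : Fin n // z k = 1}, (if i = (j : Fin n) then g (j : Fin n) else 0)
      = if z i = 1 then g i else 0 := by
  by_cases h : z i = 1
  · rw [if_pos h, Fintype.sum_eq_single (⟨i, h⟩ : {k : Fin n // z k = 1})]
    · simp
    · intro j hj
      rw [if_neg]
      intro hij
      exact hj (Subtype.ext hij.symm)
  · rw [if_neg h]
    apply Finset.sum_eq_zero
    intro j _
    rw [if_neg]
    rintro rfl
    exact h j.2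

theorem cost_restriction (n : ℕ) (lam : ℝ) (hlam : 0 < lam)
    (M : Matrix (Fin n) (Fin n) ℝ) (hM : M.PosSemidef)
    (μ : Fin n → ℝ) (z : Fin n → ℝ) (hz : ∀ i, z i = 0 ∨ z i = 1) :
    μ ⬝ᵥ ((lam • (1 : Matrix (Fin n) (Fin n) ℝ) + Matrix.diagonal z * M)⁻¹ *ᵥ
        (Matrix.diagonal z *ᵥ μ))
      = (fun i : {i : Fin n // z i = 1} => μ i.val) ⬝ᵥ
        (((lam • (1 : Matrix {i : Fin n // z i = 1} {i : Fin n // z i = 1} ℝ) +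
            M.submatrix Subtype.val Subtype.val)⁻¹)
          *ᵥ (fun i : {i : Fin n // z i = 1} => μ i.val)) := by
  classical
  set S := {i : Fin n // z i = 1} with hS
  set A : Matrix (Fin n) (Fin n) ℝ := lam • 1 + Matrix.diagonal z * M with hA
  set B : Matrix S S ℝ := lam • 1 + M.submatrix Subtype.val Subtype.val with hB
  set P : Matrix (Fin n) S ℝ :=
    Matrix.of (fun i (j : S) => if i = (j : Fin n) then (1 : ℝ) else 0) with hP
  -- basic facts about P
  have hPtP : Pᵀ * P = 1 := by
    ext j k
    simp only [mul_apply, transpose_apply, hP, Matrix.of_apply, ite_mul, one_mul, zero_mul,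
      one_apply]
    rw [Finset.sum_ite_eq' Finset.univ (j : Fin n) (fun i => if i = (k : Fin n) then (1:ℝ) else 0)]
    simp only [Finset.mem_univ, if_true]
    rcases eq_or_ne j k with h | h
    · simp [h]
    · rw [if_neg (fun hc => h (Subtype.ext hc)), if_neg h]
  have hPPt : P * Pᵀ = Matrix.diagonal z := by
    ext i k
    simp only [mul_apply, transpose_apply, hP, Matrix.of_apply]
    have h2 : ∀ j : S, (if i = (j : Fin n) then (1:ℝ) else 0) * (if k = (j : Fin n) then 1 else 0)
        = if i = (j : Fin n) then (if k = (j : Fin n) then (1:ℝ) else 0) else 0 := by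
      intro j; split_ifs <;> simp
    simp_rw [h2]
    rw [sum_ite_subtype_aux z i (fun t => if k = t then (1:ℝ) else 0)]
    rcases hz i with h0 | h1
    · rw [if_neg (by rw [h0]; norm_num), Matrix.diagonal_apply]
      split_ifs with hik
      · exact h0.symm
      · rfl
    · rw [if_pos h1, Matrix.diagonal_apply]
      by_cases hik : i = k
      · subst hik; rw [if_pos rfl, if_pos rfl, h1]
      · rw [if_neg (fun h => hik h.symm), if_neg hik]
  have hPtMP : Pᵀ * M * P = M.submatrix Subtype.val Subtype.val := by
    ext j k
    have h1 : ∀ t, (Pᵀ * M) j t = M (j : Fin n) t := by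
      intro t
      simp only [mul_apply, transpose_apply, hP, Matrix.of_apply, ite_mul, one_mul, zero_mul]
      rw [Finset.sum_ite_eq' Finset.univ (j : Fin n) (fun i => M i t)]
      simp
    rw [mul_apply, Finset.sum_congr rfl (fun t _ => by rw [h1 t])]
    simp only [h1, hP, Matrix.of_apply, mul_ite, mul_one, mul_zero]
    rw [Finset.sum_ite_eq' Finset.univ (k : Fin n) (fun t => M (j : Fin n) t)]
    simp [Matrix.submatrix_apply]
  have hPtmu : Pᵀ *ᵥ μ = fun j : S => μ (j : Fin n) := by
    funext j
    simp only [mulVec, dotProduct, transpose_apply, hP, Matrix.of_apply, ite_mul, one_mul,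
      zero_mul]
    rw [Finset.sum_ite_eq' Finset.univ (j : Fin n) μ]
    simp
  -- B is positive definite, hence invertible
  have hBpd : B.PosDef := by
    have h1 : (lam • (1 : Matrix S S ℝ)).PosDef := by
      rw [Matrix.smul_one_eq_diagonal]
      exact Matrix.posDef_diagonal_iff.mpr fun _ => hlam
    exact h1.add_posSemidef (hM.submatrix Subtype.val)
  have hBu : IsUnit B.det := hBpd.det_pos.ne'.isUnit
  -- key intertwining identity
  have hAP : A * P = P * B := by
    rw [hA, hB, Matrix.add_mul, Matrix.mul_add, Matrix.smul_mul, Matrix.one_mul,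
      Matrix.mul_smul, Matrix.mul_one, ← hPtMP, ← hPPt]
    simp only [Matrix.mul_assoc]
  -- A is invertible
  have hAu : IsUnit A.det := by
    rw [isUnit_iff_ne_zero]
    intro hdet
    obtain ⟨v, hv0, hAv⟩ := (Matrix.exists_mulVec_eq_zero_iff).mpr hdet
    have hcomp : ∀ i, lam * v i + z i * (M *ᵥ v) i = 0 := by
      intro i
      have := congrFun hAv i
      simpa [hA, Matrix.add_mulVec, Matrix.smul_mulVec, ← Matrix.mulVec_mulVec,
        Matrix.mulVec_diagonal] using this
    have hoff : ∀ i, z i = 0 → v i = 0 := by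
      intro i h0
      have := hcomp i
      rw [h0, zero_mul, add_zero] at this
      exact (mul_eq_zero.mp this).resolve_left hlam.ne'
    set w : S → ℝ := fun j => v (j : Fin n) with hw
    have hvPw : v = P *ᵥ w := by
      funext i
      simp only [mulVec, dotProduct, hP, Matrix.of_apply, ite_mul, one_mul, zero_mul, hw]
      rw [sum_ite_subtype_aux z i v]
      rcases hz i with h0 | h1
      · rw [if_neg (by rw [h0]; norm_num), hoff i h0]
      · rw [if_pos h1]
    have hBw : B *ᵥ w = 0 := by
      have h1 : P *ᵥ (B *ᵥ w) = 0 := by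
        rw [Matrix.mulVec_mulVec, ← hAP, ← Matrix.mulVec_mulVec, ← hvPw, hAv]
      have h2 : Pᵀ *ᵥ (P *ᵥ (B *ᵥ w)) = 0 := by rw [h1, Matrix.mulVec_zero]
      rwa [Matrix.mulVec_mulVec (B *ᵥ w) Pᵀ P, hPtP, Matrix.one_mulVec] at h2
    have hw0 : w = 0 := by
      have h3 : B⁻¹ *ᵥ (B *ᵥ w) = 0 := by rw [hBw, Matrix.mulVec_zero]
      rwa [Matrix.mulVec_mulVec w B⁻¹ B, Matrix.nonsing_inv_mul B hBu, Matrix.one_mulVec] at h3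
    exact hv0 (by rw [hvPw, hw0, Matrix.mulVec_zero])
  -- main computation
  set y : S → ℝ := B⁻¹ *ᵥ (Pᵀ *ᵥ μ) with hy
  have hkey : A⁻¹ *ᵥ (Matrix.diagonal z *ᵥ μ) = P *ᵥ y := by
    have h1 : A *ᵥ (P *ᵥ y) = Matrix.diagonal z *ᵥ μ := by
      rw [Matrix.mulVec_mulVec y A P, hAP, ← Matrix.mulVec_mulVec y P B, hy,
        Matrix.mulVec_mulVec (Pᵀ *ᵥ μ) B B⁻¹, Matrix.mul_nonsing_inv B hBu, Matrix.one_mulVec,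
        Matrix.mulVec_mulVec μ P Pᵀ, hPPt]
    rw [← h1, Matrix.mulVec_mulVec (P *ᵥ y) A⁻¹ A, Matrix.nonsing_inv_mul A hAu,
      Matrix.one_mulVec]
  rw [hkey, Matrix.dotProduct_mulVec, ← Matrix.mulVec_transpose, hPtmu, hy, hPtmu]
end

section
/- Let n ∈ ℕ, let F ⊆ ℝⁿ be a nonempty finite set, and let c : ℝⁿ → ℝ be a function together with a map g : ℝⁿ → ℝⁿ such that c(z) ≥ c(w) + g(w)ᵀ(z − w) for all z, w ∈ F (g(w) is a subgradient of c at w relative to F). Suppose sequences z : ℕ → F and η : ℕ → ℝ satisfy, for every i ≥ 1: (z(i), η(i)) minimizes η' over all pairs (z', η') with z' ∈ F and η' ≥ c(z(τ)) + g(z(τ))ᵀ(z' − z(τ)) for all τ < i. Then there exists an index i ≤ |F| such that c(z(i)) ≤ η(i), and for any such i, z(i) is a minimizer of c over F. -/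
open Matrix

theorem cutting_plane_terminates_correct (n : ℕ)
    (F : Finset (Fin n → ℝ)) (hF : F.Nonempty)
    (c : (Fin n → ℝ) → ℝ) (g : (Fin n → ℝ) → (Fin n → ℝ))
    (hsub : ∀ z ∈ F, ∀ w ∈ F, c z ≥ c w + g w ⬝ᵥ (z - w))
    (z : ℕ → (Fin n → ℝ)) (η : ℕ → ℝ)
    (hzF : ∀ i, z i ∈ F)
    (hfeas : ∀ i, 1 ≤ i → ∀ τ < i, η i ≥ c (z τ) + g (z τ) ⬝ᵥ (z i - z τ))
    (hmin : ∀ i, 1 ≤ i → ∀ z' ∈ F, ∀ η' : ℝ,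
      (∀ τ < i, η' ≥ c (z τ) + g (z τ) ⬝ᵥ (z' - z τ)) → η i ≤ η') :
    (∃ i, 1 ≤ i ∧ i ≤ F.card ∧ c (z i) ≤ η i) ∧
    (∀ i, 1 ≤ i → c (z i) ≤ η i → ∀ w ∈ F, c (z i) ≤ c w) := by
  constructor
  · by_contra h
    push_neg at h
    have hinj : ∀ τ i, τ < i → i ≤ F.card → z τ ≠ z i := by
      intro τ i hτi hi heq
      have h1 := hfeas i (by omega) τ hτi
      rw [← heq, sub_self, dotProduct_zero, add_zero] at h1
      have h2 := h i (by omega) hi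
      rw [← heq] at h2
      exact absurd h1 (not_le.mpr h2)
    have hI : Function.Injective (fun k : Fin (F.card + 1) => (⟨z k, hzF k⟩ : F)) := by
      intro a b hab
      simp only [Subtype.mk_eq_mk] at hab
      by_contra hne
      rcases lt_or_gt_of_ne (Fin.val_ne_of_ne hne) with h' | h'
      · exact hinj a b h' (Nat.lt_succ_iff.mp b.isLt) hab
      · exact hinj b a h' (Nat.lt_succ_iff.mp a.isLt) hab.symm
    have hc := Fintype.card_le_of_injective _ hI
    simp [Fintype.card_coe] at hc
  · intro i hi hci w hw
    have := hmin i hi w hw (c w) (fun τ hτ => hsub w hw (z τ) (hzF τ))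
    linarith
end
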